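/- arXiv:0901.2777 — 3 statements merged into one kernel-verified Lean document; each statement's English description precedes it below -/
import Mathlib

section
/- Let β > 1. There exists a constant c = c(β) ≥ 1 such that for all t ∈ [0,1), (1/c)·(1 − log(1−t))^{−β}/(1−t)² ≤ 1 + ∑_{k=2}^∞ k (log k)^{−β} t^k ≤ c·(1 − log(1−t))^{−β}/(1−t)². -/
open Set

/-- The series `1 + ∑_{k=2}^∞ k (log k)^{−β} t^k` (indexed by `k = j + 2`). -/
noncomputable def logSeries (β t : ℝ) : ℝ :=
  1 + ∑' j : ℕ, ((j : ℝ) + 2) * (Real.log ((j : ℝ) + 2)) ^ (-β) * t ^ (j + 2)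

open Set

section helpers
variable {β : ℝ}

lemma rpow_neg_anti (hβ : 0 ≤ β) {x y : ℝ} (hx : 0 < x) (hxy : x ≤ y) :
    y ^ (-β) ≤ x ^ (-β) := by
  have hy : 0 < y := hx.trans_le hxy
  rw [Real.rpow_neg hx.le, Real.rpow_neg hy.le]
  exact inv_anti₀ (Real.rpow_pos_of_pos hx β) (Real.rpow_le_rpow hx.le hxy hβ)

lemma term_nonneg (hβ : 0 ≤ β) {t : ℝ} (ht : 0 ≤ t) (j : ℕ) :
    0 ≤ ((j : ℝ) + 2) * (Real.log ((j : ℝ) + 2)) ^ (-β) * t ^ (j + 2) := by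
  have h2 : (0:ℝ) < (j : ℝ) + 2 := by positivity
  have hlog : 0 < Real.log ((j : ℝ) + 2) := by
    apply Real.log_pos
    have : (0:ℝ) ≤ (j:ℝ) := Nat.cast_nonneg j
    linarith
  positivity

lemma summable_aux {t : ℝ} (ht0 : 0 ≤ t) (ht1 : t < 1) :
    Summable (fun j : ℕ => ((j : ℝ) + 2) * t ^ (j + 2)) := by
  have h := summable_pow_mul_geometric_of_norm_lt_one (R := ℝ) 1
    (r := t) (by rw [Real.norm_eq_abs, abs_lt]; constructor <;> linarith)
  have h2 := h.comp_injective (fun a b h => by simpa using h : Function.Injective (fun n : ℕ => n + 2))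
  refine h2.congr fun j => ?_
  simp only [Function.comp]
  push_cast
  ring

lemma summable_main (hβ : 0 ≤ β) {t : ℝ} (ht0 : 0 ≤ t) (ht1 : t < 1) :
    Summable (fun j : ℕ => ((j : ℝ) + 2) * (Real.log ((j : ℝ) + 2)) ^ (-β) * t ^ (j + 2)) := by
  refine Summable.of_nonneg_of_le (term_nonneg hβ ht0) (fun j => ?_) ((summable_aux ht0 ht1).mul_left (Real.log 2 ^ (-β)))
  · have hlog2 : (0:ℝ) < Real.log 2 := Real.log_pos (by norm_num)
    have hle : Real.log 2 ≤ Real.log ((j:ℝ) + 2) := by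
      apply Real.log_le_log (by norm_num)
      push_cast; linarith [Nat.cast_nonneg (α := ℝ) j]
    have h := rpow_neg_anti hβ hlog2 hle
    have ht : 0 ≤ t ^ (j + 2) := by positivity
    have hj : (0:ℝ) ≤ (j:ℝ) + 2 := by positivity
    calc ((j : ℝ) + 2) * (Real.log ((j : ℝ) + 2)) ^ (-β) * t ^ (j + 2)
        ≤ ((j : ℝ) + 2) * Real.log 2 ^ (-β) * t ^ (j + 2) := by
          apply mul_le_mul_of_nonneg_right _ ht
          exact mul_le_mul_of_nonneg_left h hj
      _ = Real.log 2 ^ (-β) * (((j : ℝ) + 2) * t ^ (j + 2)) := by ring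

end helpers

lemma lower_bound {β : ℝ} (hβ0 : 0 ≤ β) {t : ℝ} (ht : 1/2 ≤ t) (ht1 : t < 1) :
    (1 - Real.log (1 - t)) ^ (-β) / (1 - t) ^ 2 ≤ (2 * Real.exp 4) * logSeries β t := by
  have ht0 : (0:ℝ) ≤ t := by linarith
  set u := 1 - t with hu_def
  have hu0 : 0 < u := by rw [hu_def]; linarith
  have hu2 : u ≤ 1/2 := by rw [hu_def]; linarith
  set ℓ := -Real.log u with hℓ_def
  have hℓ0 : 0 ≤ ℓ := by
    have := Real.log_nonpos hu0.le (by linarith : u ≤ 1)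
    rw [hℓ_def]; linarith
  set L := 1 + ℓ with hL_def
  have hLpos : 0 < L := by rw [hL_def]; linarith
  have hLeq : 1 - Real.log u = L := by rw [hL_def, hℓ_def]; ring
  set N := Nat.floor (1/u) with hN_def
  have hNle : (N:ℝ) ≤ 1/u := Nat.floor_le (by positivity)
  have hNgt : 1/u < N + 1 := Nat.lt_floor_add_one _
  have hN2 : 2 ≤ N := by
    have h2 : (2:ℝ) ≤ 1/u := by rw [le_div_iff₀ hu0]; linarith
    exact Nat.le_floor (by exact_mod_cast h2)
  have hNhalf : 1/(2*u) ≤ (N:ℝ) := by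
    have h1 : (1:ℝ) ≤ 1/(2*u) := by rw [le_div_iff₀ (by linarith)]; linarith
    have h2 : 1/u = 1/(2*u) + 1/(2*u) := by field_simp; ring
    linarith
  have hsum := summable_main hβ0 ht0 ht1
  set F := fun j : ℕ => ((j : ℝ) + 2) * (Real.log ((j : ℝ) + 2)) ^ (-β) * t ^ (j + 2) with hF
  have key : ∀ j ∈ Finset.Ico (N-1) (2*N-1),
      (1/u) * L^(-β) * Real.exp (-4) ≤ F j := by
    intro j hj
    rw [Finset.mem_Ico] at hj
    have hk1 : N + 1 ≤ j + 2 := by omega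
    have hk2 : j + 2 ≤ 2*N := by omega
    have hkR : (1:ℝ)/u ≤ (j:ℝ) + 2 := by
      have h : ((N:ℝ)+1) ≤ (j:ℝ)+2 := by exact_mod_cast hk1
      linarith
    have hk2R : ((j:ℝ)+2) ≤ 2*(N:ℝ) := by exact_mod_cast hk2
    have hlogpos : 0 < Real.log ((j:ℝ)+2) :=
      Real.log_pos (by have : (0:ℝ) ≤ (j:ℝ) := Nat.cast_nonneg j; linarith)
    have hlogle : Real.log ((j:ℝ)+2) ≤ L := by
      have h2N : ((j:ℝ)+2) ≤ 2/u := by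
        have h2u : 2*(1/u) = 2/u := by ring
        calc ((j:ℝ)+2) ≤ 2*(N:ℝ) := hk2R
          _ ≤ 2/u := by rw [← h2u]; linarith
      calc Real.log ((j:ℝ)+2) ≤ Real.log (2/u) := Real.log_le_log (by positivity) h2N
        _ = Real.log 2 - Real.log u := by rw [Real.log_div two_ne_zero hu0.ne']
        _ ≤ L := by
            have h2 : Real.log 2 < 1 := by
              have := Real.log_two_lt_d9; linarith
            rw [hL_def, hℓ_def]; linarith
    have hrpow : L^(-β) ≤ (Real.log ((j:ℝ)+2))^(-β) := rpow_neg_anti hβ0 hlogpos hlogle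
    have hexp_le : Real.exp (-(2*u)) ≤ t := by
      have h1 := Real.add_one_le_exp (2*u)
      have h2 : Real.exp (-(2*u)) * Real.exp (2*u) = 1 := by
        rw [← Real.exp_add]; ring_nf; exact Real.exp_zero
      have h3 := Real.exp_pos (-(2*u))
      have h4 := Real.exp_pos (2*u)
      nlinarith [mul_le_mul_of_nonneg_left h1 h3.le]
    have hpow : Real.exp (-4) ≤ t ^ (j+2) := by
      have huN : u * N ≤ 1 := by
        have h1 : u * (1/u) = 1 := mul_one_div_cancel hu0.ne'
        nlinarith [mul_le_mul_of_nonneg_left hNle hu0.le]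
      calc Real.exp (-4) ≤ Real.exp (-(2*u)) ^ (2*N) := by
            rw [← Real.exp_nat_mul]
            apply Real.exp_le_exp.2
            push_cast
            nlinarith
        _ ≤ t ^ (2*N) := pow_le_pow_left₀ (Real.exp_pos _).le hexp_le _
        _ ≤ t ^ (j+2) := pow_le_pow_of_le_one ht0 ht1.le hk2
    have hLβpos : 0 < L^(-β) := Real.rpow_pos_of_pos hLpos _
    have hstep1 : (1/u) * L^(-β) ≤ ((j:ℝ)+2) * (Real.log ((j:ℝ)+2))^(-β) :=
      mul_le_mul hkR hrpow hLβpos.le (by positivity)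
    calc (1/u) * L^(-β) * Real.exp (-4)
        ≤ ((j:ℝ)+2) * (Real.log ((j:ℝ)+2))^(-β) * t^(j+2) :=
          mul_le_mul hstep1 hpow (Real.exp_pos _).le
            (mul_nonneg (by positivity) (Real.rpow_nonneg hlogpos.le _))
      _ = F j := rfl
  have hcard : (Finset.Ico (N-1) (2*N-1)).card = N := by
    rw [Nat.card_Ico]; omega
  have hsum_lb : (N:ℝ) * ((1/u) * L^(-β) * Real.exp (-4)) ≤ ∑' j, F j := by
    have h1 : (Finset.Ico (N-1) (2*N-1)).card • ((1/u) * L^(-β) * Real.exp (-4))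
        ≤ ∑ j ∈ Finset.Ico (N-1) (2*N-1), F j := Finset.card_nsmul_le_sum _ _ _ key
    rw [hcard, nsmul_eq_mul] at h1
    exact h1.trans (Summable.sum_le_tsum _ (fun i _ => term_nonneg hβ0 ht0 i) hsum)
  have hLβpos : 0 < L^(-β) := Real.rpow_pos_of_pos hLpos _
  have hee : Real.exp 4 * Real.exp (-4) = 1 := by rw [← Real.exp_add]; norm_num
  have step : L^(-β)/u^2 ≤ 2 * Real.exp 4 * ((N:ℝ) * ((1/u) * L^(-β) * Real.exp (-4))) := by
    have h1 : (1/(2*u)) * ((1/u) * L^(-β)) ≤ (N:ℝ) * ((1/u) * L^(-β)) :=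
      mul_le_mul_of_nonneg_right hNhalf (by positivity)
    have h2 : L^(-β)/u^2 = 2 * ((1/(2*u)) * ((1/u) * L^(-β))) := by field_simp
    have h3 : 2 * Real.exp 4 * ((N:ℝ) * ((1/u) * L^(-β) * Real.exp (-4)))
        = 2 * ((N:ℝ) * ((1/u) * L^(-β))) := by
      linear_combination (2*(N:ℝ)*(1/u)*L^(-β)) * hee
    rw [h2, h3]
    linarith
  have hts : 0 ≤ ∑' j, F j := tsum_nonneg (fun j => term_nonneg hβ0 ht0 j)
  have hfinal : (N:ℝ) * ((1/u) * L^(-β) * Real.exp (-4)) ≤ logSeries β t := by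
    rw [logSeries]
    calc (N:ℝ) * ((1/u) * L^(-β) * Real.exp (-4)) ≤ ∑' j, F j := hsum_lb
      _ ≤ 1 + ∑' j, F j := by linarith
  calc (1 - Real.log u) ^ (-β) / u ^ 2 = L^(-β)/u^2 := by rw [hLeq]
    _ ≤ 2 * Real.exp 4 * ((N:ℝ) * ((1/u) * L^(-β) * Real.exp (-4))) := step
    _ ≤ 2 * Real.exp 4 * logSeries β t := by
        apply mul_le_mul_of_nonneg_left hfinal (by positivity)

set_option maxHeartbeats 1000000 in
lemma upper_bound {β : ℝ} (hβ0 : 0 ≤ β) {x₀ : ℝ} (hx₀2 : 2 ≤ x₀)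
    (hx₀ : ∀ x, x₀ ≤ x → (1+x)^β ≤ Real.exp (x/2))
    {t : ℝ} (ht : 1 - Real.exp (-x₀) ≤ t) (ht1 : t < 1) :
    logSeries β t ≤ (1 + Real.log 2 ^ (-β) + (8:ℝ)^β + (2:ℝ)^β) *
      ((1 - Real.log (1 - t)) ^ (-β) / (1 - t) ^ 2) := by
  -- basic facts about u = 1 - t
  have hexp2 : Real.exp (-x₀) ≤ Real.exp (-2) := Real.exp_le_exp.2 (by linarith)
  have he2 : Real.exp (-2) ≤ 1/3 := by
    have h1 := Real.add_one_le_exp (2:ℝ)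
    have h2 : Real.exp (-2) * Real.exp 2 = 1 := by rw [← Real.exp_add]; norm_num
    have h3 := Real.exp_pos (-2:ℝ)
    nlinarith
  have ht0 : (0:ℝ) ≤ t := by linarith
  set u := 1 - t with hu_def
  have hu0 : 0 < u := by rw [hu_def]; linarith
  have hux : u ≤ Real.exp (-x₀) := by rw [hu_def]; linarith
  have hu2 : u ≤ 1/2 := by linarith
  have hu1 : u ≤ 1 := by linarith
  -- 1/u ≥ 3
  have h1u3 : (3:ℝ) ≤ 1/u := by
    rw [le_div_iff₀ hu0]; nlinarith
  set ℓ := -Real.log u with hℓ_def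
  have hℓx : x₀ ≤ ℓ := by
    have h := Real.log_le_log hu0 hux
    rw [Real.log_exp] at h
    rw [hℓ_def]; linarith
  have hℓ2 : 2 ≤ ℓ := by linarith
  set L := 1 + ℓ with hL_def
  have hLpos : 0 < L := by rw [hL_def]; linarith
  have hLeq : 1 - Real.log u = L := by rw [hL_def, hℓ_def]; ring
  set Q := L ^ (-β) with hQ_def
  have hQpos : 0 < Q := Real.rpow_pos_of_pos hLpos _
  have hPpos : 0 < L ^ β := Real.rpow_pos_of_pos hLpos _
  -- s = sqrt u and the key inequality s ≤ Q
  set s := Real.sqrt u with hs_def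
  have hs0 : 0 < s := Real.sqrt_pos.2 hu0
  have hs2 : s^2 = u := Real.sq_sqrt hu0.le
  have hs1 : s ≤ 1 := by
    rw [hs_def]; rw [show (1:ℝ) = Real.sqrt 1 from (Real.sqrt_one).symm]
    exact Real.sqrt_le_sqrt hu1
  have hus : u ≤ s := by nlinarith
  have keyQ : s ≤ Q := by
    have hkey : L ^ β ≤ Real.exp (ℓ/2) := by
      have := hx₀ ℓ hℓx; rwa [← hL_def] at this
    have heℓs : Real.exp (ℓ/2) * s = 1 := by
      have hsq : (Real.exp (ℓ/2) * s)^2 = 1 := by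
        have e1 : (Real.exp (ℓ/2))^2 = Real.exp ℓ := by
          rw [sq, ← Real.exp_add]; norm_num
        have e2 : Real.exp ℓ = 1/u := by
          rw [hℓ_def, Real.exp_neg, Real.exp_log hu0, one_div]
        rw [mul_pow, e1, e2, hs2]
        field_simp
      calc Real.exp (ℓ/2) * s = Real.sqrt ((Real.exp (ℓ/2) * s)^2) :=
            (Real.sqrt_sq (by positivity)).symm
        _ = 1 := by rw [hsq, Real.sqrt_one]
    -- L^β * s ≤ 1, hence s ≤ Q = (L^β)⁻¹
    have h1 : L ^ β * s ≤ 1 := by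
      calc L ^ β * s ≤ Real.exp (ℓ/2) * s := by
            apply mul_le_mul_of_nonneg_right hkey hs0.le
        _ = 1 := heℓs
    rw [hQ_def, Real.rpow_neg hLpos.le]
    have hinv : L ^ β * (L ^ β)⁻¹ = 1 := mul_inv_cancel₀ hPpos.ne'
    nlinarith [inv_pos.2 hPpos]
  -- N = floor(1/u)
  set N := Nat.floor (1/u) with hN_def
  have hNle : (N:ℝ) ≤ 1/u := Nat.floor_le (by positivity)
  have hNgt : 1/u < N + 1 := Nat.lt_floor_add_one _
  have hN3 : 3 ≤ N := Nat.le_floor (by exact_mod_cast h1u3)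
  have hNhalf : 1/(2*u) ≤ (N:ℝ) := by
    have h1 : (1:ℝ) ≤ 1/(2*u) := by rw [le_div_iff₀ (by linarith)]; linarith
    have h2 : 1/u = 1/(2*u) + 1/(2*u) := by field_simp; ring
    linarith
  set n := N - 1 with hn_def
  have hn2 : n + 2 = N + 1 := by omega
  have hsum := summable_main hβ0 ht0 ht1
  set F := fun j : ℕ => ((j : ℝ) + 2) * (Real.log ((j : ℝ) + 2)) ^ (-β) * t ^ (j + 2) with hF
  have hsplit : ∑ i ∈ Finset.range n, F i + ∑' i, F (i + n) = ∑' i, F i :=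
    Summable.sum_add_tsum_nat_add n hsum
  clear_value n N s Q L ℓ
  have hlog2pos : (0:ℝ) < Real.log 2 := Real.log_pos (by norm_num)
  have hlog2lt : Real.log 2 < 1 := by have := Real.log_two_lt_d9; linarith
  have hc2pos : (0:ℝ) < Real.log 2 ^ (-β) := Real.rpow_pos_of_pos hlog2pos _
  have hc8pos : (0:ℝ) < (8:ℝ)^β := Real.rpow_pos_of_pos (by norm_num) _
  have hc2βpos : (0:ℝ) < (2:ℝ)^β := Real.rpow_pos_of_pos (by norm_num) _
  -- head bound
  have hhead_term : ∀ j ∈ Finset.range n,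
      F j ≤ Real.log 2 ^ (-β) * (1/s) + (8:ℝ)^β * Q * (N:ℝ) := by
    intro j hj
    rw [Finset.mem_range] at hj
    have hkN : j + 2 ≤ N := by omega
    have hkNR : ((j:ℝ)+2) ≤ (N:ℝ) := by exact_mod_cast hkN
    have hkpos : (0:ℝ) < (j:ℝ) + 2 := by positivity
    have hlogpos : 0 < Real.log ((j:ℝ)+2) :=
      Real.log_pos (by have : (0:ℝ) ≤ (j:ℝ) := Nat.cast_nonneg j; linarith)
    have htpow : t ^ (j+2) ≤ 1 := pow_le_one₀ ht0 ht1.le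
    have htpow0 : 0 ≤ t ^ (j+2) := by positivity
    by_cases hcase : (j+2)*(j+2) ≤ N
    · -- small k: F j ≤ log2^{-β} * (1/s)
      have hsmall : ((j:ℝ)+2) ≤ 1/s := by
        have h1 : ((j:ℝ)+2)^2 ≤ (N:ℝ) := by
          have h := (Nat.cast_le (α := ℝ)).2 hcase
          push_cast at h; nlinarith
        have h2 : ((j:ℝ)+2)^2 ≤ (1/s)^2 := by
          have he : (1/s)^2 = 1/u := by rw [div_pow, one_pow, hs2]
          rw [he]; linarith
        exact le_of_pow_le_pow_left₀ two_ne_zero (by positivity) h2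
      have hlogle : (Real.log ((j:ℝ)+2)) ^ (-β) ≤ Real.log 2 ^ (-β) := by
        apply rpow_neg_anti hβ0 hlog2pos
        apply Real.log_le_log (by norm_num)
        linarith [Nat.cast_nonneg (α := ℝ) j]
      have hfj : F j ≤ (1/s) * Real.log 2 ^ (-β) * 1 := by
        rw [hF]
        apply mul_le_mul _ htpow htpow0 (by positivity)
        exact mul_le_mul hsmall hlogle (Real.rpow_nonneg hlogpos.le _) (by positivity)
      have h8 : 0 ≤ (8:ℝ)^β * Q * (N:ℝ) := by positivity
      calc F j ≤ (1/s) * Real.log 2 ^ (-β) * 1 := hfj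
        _ = Real.log 2 ^ (-β) * (1/s) := by ring
        _ ≤ Real.log 2 ^ (-β) * (1/s) + (8:ℝ)^β * Q * (N:ℝ) := by linarith
    · -- large k: log k ≥ L/8
      push_neg at hcase
      have hklog : L/8 ≤ Real.log ((j:ℝ)+2) := by
        have hNk : (N:ℝ) ≤ ((j:ℝ)+2)^2 := by
          have h := (Nat.cast_le (α := ℝ)).2 hcase.le
          push_cast at h; nlinarith
        have h1 : 1/(2*u) ≤ ((j:ℝ)+2)^2 := le_trans hNhalf hNk
        have h2 : Real.log (1/(2*u)) ≤ Real.log (((j:ℝ)+2)^2) :=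
          Real.log_le_log (by positivity) h1
        have h3 : Real.log (((j:ℝ)+2)^2) = 2 * Real.log ((j:ℝ)+2) := by
          rw [Real.log_pow]; norm_num
        have h4 : Real.log (1/(2*u)) = -(Real.log 2 + Real.log u) := by
          rw [one_div, Real.log_inv, Real.log_mul two_ne_zero hu0.ne']
        rw [h3, h4] at h2
        rw [hL_def, hℓ_def]
        linarith
      have hrpow : (Real.log ((j:ℝ)+2)) ^ (-β) ≤ (8:ℝ)^β * Q := by
        have h1 := rpow_neg_anti hβ0 (by linarith : (0:ℝ) < L/8) hklog
        have h2 : (L/8) ^ (-β) = (8:ℝ)^β * Q := by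
          rw [Real.div_rpow hLpos.le (by norm_num), hQ_def]
          rw [Real.rpow_neg (by norm_num : (0:ℝ) ≤ 8)]
          field_simp
        rw [← h2]; exact h1
      have hfj : F j ≤ (N:ℝ) * ((8:ℝ)^β * Q) * 1 := by
        rw [hF]
        apply mul_le_mul _ htpow htpow0 (by positivity)
        exact mul_le_mul hkNR hrpow (Real.rpow_nonneg hlogpos.le _) (by positivity)
      have hd1 : 0 ≤ Real.log 2 ^ (-β) * (1/s) := by positivity
      calc F j ≤ (N:ℝ) * ((8:ℝ)^β * Q) * 1 := hfj
        _ = (8:ℝ)^β * Q * (N:ℝ) := by ring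
        _ ≤ Real.log 2 ^ (-β) * (1/s) + (8:ℝ)^β * Q * (N:ℝ) := by linarith
  have hhead : ∑ i ∈ Finset.range n, F i
      ≤ (N:ℝ) * (Real.log 2 ^ (-β) * (1/s) + (8:ℝ)^β * Q * (N:ℝ)) := by
    have h1 := Finset.sum_le_card_nsmul _ _ _ hhead_term
    rw [Finset.card_range, nsmul_eq_mul] at h1
    have hnN : (n:ℝ) ≤ (N:ℝ) := by exact_mod_cast (by omega : n ≤ N)
    have hpos : 0 ≤ Real.log 2 ^ (-β) * (1/s) + (8:ℝ)^β * Q * (N:ℝ) := by positivity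
    exact h1.trans (mul_le_mul_of_nonneg_right hnN hpos)
  -- tail bound
  have htlt : ‖t‖ < 1 := by rw [Real.norm_eq_abs, abs_lt]; constructor <;> linarith
  set g := fun m : ℕ => (m:ℝ) * t ^ m with hg_def
  have hg : Summable g := by
    have h := summable_pow_mul_geometric_of_norm_lt_one (R := ℝ) 1 htlt
    refine h.congr fun m => ?_
    rw [hg_def]; simp [pow_one]
  have hgnonneg : ∀ m, 0 ≤ g m := fun m => by rw [hg_def]; positivity
  have hgtail_le : ∑' j, g (j + (n+2)) ≤ 1/u^2 := by
    have h1 := Summable.sum_add_tsum_nat_add (f := g) (n+2) hg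
    have h2 : 0 ≤ ∑ i ∈ Finset.range (n+2), g i := Finset.sum_nonneg fun i _ => hgnonneg i
    have h3 : ∑' m, g m ≤ 1/u^2 := by
      rw [hg_def]
      rw [tsum_coe_mul_geometric_of_norm_lt_one htlt, ← hu_def]
      gcongr
    linarith
  have htail_term : ∀ j : ℕ, F (j + n) ≤ (2:ℝ)^β * Q * g (j + (n+2)) := by
    intro j
    have hkge : (1:ℝ)/u ≤ ((j+n:ℕ):ℝ)+2 := by
      have hc : N + 1 ≤ (j + n) + 2 := by omega
      have hcR : ((N:ℝ)+1) ≤ ((j+n:ℕ):ℝ)+2 := by exact_mod_cast hc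
      linarith
    have h1upos : (0:ℝ) < 1/u := by positivity
    have hlogpos : 0 < Real.log (((j+n:ℕ):ℝ)+2) := by
      apply Real.log_pos
      have : (0:ℝ) ≤ ((j+n:ℕ):ℝ) := Nat.cast_nonneg _
      linarith
    have hloggeq : L/2 ≤ Real.log (((j+n:ℕ):ℝ)+2) := by
      have h1 : Real.log (1/u) ≤ Real.log (((j+n:ℕ):ℝ)+2) :=
        Real.log_le_log h1upos hkge
      have h2 : Real.log (1/u) = ℓ := by
        rw [one_div, Real.log_inv, hℓ_def]
      rw [h2] at h1
      rw [hL_def]; linarith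
    have hrpow : (Real.log (((j+n:ℕ):ℝ)+2)) ^ (-β) ≤ (2:ℝ)^β * Q := by
      have h1 := rpow_neg_anti hβ0 (by linarith : (0:ℝ) < L/2) hloggeq
      have h2 : (L/2) ^ (-β) = (2:ℝ)^β * Q := by
        rw [Real.div_rpow hLpos.le (by norm_num), hQ_def]
        rw [Real.rpow_neg (by norm_num : (0:ℝ) ≤ 2)]
        field_simp
      rw [← h2]; exact h1
    have hgval : g (j + (n+2)) = (((j+n:ℕ):ℝ)+2) * t ^ ((j+n)+2) := by
      rw [hg_def]
      have he : j + (n+2) = (j+n)+2 := by omega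
      rw [he]
      push_cast
      ring
    have hFval : F (j+n) = (((j+n:ℕ):ℝ)+2) * (Real.log (((j+n:ℕ):ℝ)+2)) ^ (-β) * t ^ ((j+n)+2) := by
      rw [hF]
    rw [hFval, hgval]
    have htp0 : (0:ℝ) ≤ t ^ ((j+n)+2) := by positivity
    have hk0 : (0:ℝ) ≤ ((j+n:ℕ):ℝ)+2 := by positivity
    calc (((j+n:ℕ):ℝ)+2) * (Real.log (((j+n:ℕ):ℝ)+2)) ^ (-β) * t ^ ((j+n)+2)
        ≤ (((j+n:ℕ):ℝ)+2) * ((2:ℝ)^β * Q) * t ^ ((j+n)+2) := by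
          apply mul_le_mul_of_nonneg_right _ htp0
          exact mul_le_mul_of_nonneg_left hrpow hk0
      _ = (2:ℝ)^β * Q * ((((j+n:ℕ):ℝ)+2) * t ^ ((j+n)+2)) := by ring
  have htail : ∑' j, F (j + n) ≤ (2:ℝ)^β * Q * (1/u^2) := by
    have hsum1 : Summable (fun j => F (j + n)) := (summable_nat_add_iff n).2 hsum
    have hsum2 : Summable (fun j => (2:ℝ)^β * Q * g (j + (n+2))) :=
      ((summable_nat_add_iff (n+2)).2 hg).mul_left _
    calc ∑' j, F (j + n) ≤ ∑' j, (2:ℝ)^β * Q * g (j + (n+2)) :=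
          Summable.tsum_le_tsum htail_term hsum1 hsum2
      _ = (2:ℝ)^β * Q * ∑' j, g (j + (n+2)) := tsum_mul_left
      _ ≤ (2:ℝ)^β * Q * (1/u^2) :=
          mul_le_mul_of_nonneg_left hgtail_le (by positivity)
  -- final assembly
  have hu2pos : (0:ℝ) < u^2 := by positivity
  have hQu1 : 1 ≤ Q/u^2 := by
    rw [le_div_iff₀ hu2pos]
    nlinarith
  have hhead1 : (N:ℝ) * (Real.log 2 ^ (-β) * (1/s)) ≤ Real.log 2 ^ (-β) * (Q/u^2) := by
    have h1 : (N:ℝ) * (1/s) ≤ (1/u) * (1/s) :=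
      mul_le_mul_of_nonneg_right hNle (by positivity)
    have h2 : (1/u) * (1/s) = 1/(u*s) := by rw [one_div_mul_one_div]
    have h3 : 1/(u*s) ≤ Q/u^2 := by
      rw [div_le_div_iff₀ (by positivity) hu2pos]
      nlinarith [mul_le_mul_of_nonneg_right keyQ hs0.le]
    calc (N:ℝ) * (Real.log 2 ^ (-β) * (1/s))
        = Real.log 2 ^ (-β) * ((N:ℝ) * (1/s)) := by ring
      _ ≤ Real.log 2 ^ (-β) * (1/(u*s)) := by
          apply mul_le_mul_of_nonneg_left _ hc2pos.le
          rw [← h2]; exact h1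
      _ ≤ Real.log 2 ^ (-β) * (Q/u^2) :=
          mul_le_mul_of_nonneg_left h3 hc2pos.le
  have hhead2 : (N:ℝ) * ((8:ℝ)^β * Q * (N:ℝ)) ≤ (8:ℝ)^β * (Q/u^2) := by
    have h1 : (N:ℝ)*(N:ℝ) ≤ (1/u)*(1/u) :=
      mul_le_mul hNle hNle (Nat.cast_nonneg N) (by positivity)
    have h2 : (1/u)*(1/u) = 1/u^2 := by rw [one_div_mul_one_div]; ring_nf
    have h3 : (8:ℝ)^β * Q * ((N:ℝ)*(N:ℝ)) ≤ (8:ℝ)^β * Q * (1/u^2) := by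
      apply mul_le_mul_of_nonneg_left _ (by positivity)
      rw [← h2]; exact h1
    calc (N:ℝ) * ((8:ℝ)^β * Q * (N:ℝ)) = (8:ℝ)^β * Q * ((N:ℝ)*(N:ℝ)) := by ring
      _ ≤ (8:ℝ)^β * Q * (1/u^2) := h3
      _ = (8:ℝ)^β * (Q/u^2) := by ring
  have hls : logSeries β t = 1 + ∑' j, F j := by
    rw [logSeries, hF]
  have hgoal2 : (1 - Real.log u)^(-β)/u^2 = Q/u^2 := by rw [hLeq, ← hQ_def]
  rw [hls, hgoal2]
  have hexp : (1 + Real.log 2 ^ (-β) + (8:ℝ)^β + (2:ℝ)^β) * (Q/u^2)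
      = Q/u^2 + Real.log 2 ^ (-β) * (Q/u^2) + (8:ℝ)^β * (Q/u^2) + (2:ℝ)^β * (Q/u^2) := by
    ring
  rw [hexp]
  have hheadsplit : (N:ℝ) * (Real.log 2 ^ (-β) * (1/s) + (8:ℝ)^β * Q * (N:ℝ))
      = (N:ℝ) * (Real.log 2 ^ (-β) * (1/s)) + (N:ℝ) * ((8:ℝ)^β * Q * (N:ℝ)) := by ring
  have htail2 : (2:ℝ)^β * Q * (1/u^2) = (2:ℝ)^β * (Q/u^2) := by ring
  linarith [hsplit, hhead, hhead1, hhead2, htail]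


lemma logSeries_ge_one {β : ℝ} (hβ0 : 0 ≤ β) {t : ℝ} (ht : 0 ≤ t) :
    1 ≤ logSeries β t := by
  rw [logSeries]
  have : 0 ≤ ∑' j : ℕ, ((j : ℝ) + 2) * (Real.log ((j : ℝ) + 2)) ^ (-β) * t ^ (j + 2) :=
    tsum_nonneg (fun j => term_nonneg hβ0 ht j)
  linarith

lemma logSeries_mono {β : ℝ} (hβ0 : 0 ≤ β) {t t' : ℝ} (ht : 0 ≤ t) (htt' : t ≤ t')
    (ht'1 : t' < 1) : logSeries β t ≤ logSeries β t' := by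
  rw [logSeries, logSeries]
  have ht1 : t < 1 := lt_of_le_of_lt htt' ht'1
  have ht'0 : 0 ≤ t' := le_trans ht htt'
  have h := Summable.tsum_le_tsum (f := fun j : ℕ => ((j : ℝ) + 2) * (Real.log ((j : ℝ) + 2)) ^ (-β) * t ^ (j + 2))
    (g := fun j : ℕ => ((j : ℝ) + 2) * (Real.log ((j : ℝ) + 2)) ^ (-β) * t' ^ (j + 2))
    (fun j => ?_) (summable_main hβ0 ht ht1) (summable_main hβ0 ht'0 ht'1)
  · linarith
  · have hlogpos : 0 < Real.log ((j:ℝ)+2) :=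
      Real.log_pos (by have : (0:ℝ) ≤ (j:ℝ) := Nat.cast_nonneg j; linarith)
    apply mul_le_mul_of_nonneg_left (pow_le_pow_left₀ ht htt' _)
    exact mul_nonneg (by positivity) (Real.rpow_nonneg hlogpos.le _)

lemma exists_x₀ {β : ℝ} (hβ0 : 0 ≤ β) :
    ∃ x₀ : ℝ, 2 ≤ x₀ ∧ ∀ x, x₀ ≤ x → (1+x)^β ≤ Real.exp (x/2) := by
  have h := tendsto_rpow_mul_exp_neg_mul_atTop_nhds_zero β (1/2) (by norm_num)
  have h2 : ∀ᶠ y in Filter.atTop, y ^ β * Real.exp (-(1/2) * y) < Real.exp (-(1/2)) :=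
    h.eventually_lt_const (Real.exp_pos _)
  obtain ⟨y₀, hy₀⟩ := Filter.eventually_atTop.1 h2
  refine ⟨max y₀ 2, le_max_right _ _, fun x hx => ?_⟩
  have hx2 : (2:ℝ) ≤ x := le_trans (le_max_right _ _) hx
  have h3 := hy₀ (1+x) (by have := le_trans (le_max_left _ _) hx; linarith)
  have key : Real.exp (-(1/2)*(1+x)) * Real.exp ((1/2)*(1+x)) = 1 := by
    rw [← Real.exp_add]; ring_nf; exact Real.exp_zero
  have heq : Real.exp (-(1/2)) * Real.exp ((1/2)*(1+x)) = Real.exp (x/2) := by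
    rw [← Real.exp_add]; congr 1; ring
  calc (1+x)^β = (1+x)^β * (Real.exp (-(1/2)*(1+x)) * Real.exp ((1/2)*(1+x))) := by
        rw [key, mul_one]
    _ = ((1+x)^β * Real.exp (-(1/2)*(1+x))) * Real.exp ((1/2)*(1+x)) := by ring
    _ ≤ Real.exp (-(1/2)) * Real.exp ((1/2)*(1+x)) :=
        mul_le_mul_of_nonneg_right h3.le (Real.exp_pos _).le
    _ = Real.exp (x/2) := heq


theorem stmt16 (β : ℝ) (hβ : 1 < β) :
    ∃ c : ℝ, 1 ≤ c ∧ ∀ t ∈ Ico (0 : ℝ) 1,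
      (1 / c) * ((1 - Real.log (1 - t)) ^ (-β) / (1 - t) ^ 2) ≤ logSeries β t ∧
        logSeries β t ≤ c * ((1 - Real.log (1 - t)) ^ (-β) / (1 - t) ^ 2) := by
  have hβ0 : (0:ℝ) ≤ β := by linarith
  obtain ⟨x₀, hx₀2, hx₀⟩ := exists_x₀ hβ0
  set u₀ := Real.exp (-x₀) with hu₀_def
  have hu₀pos : 0 < u₀ := Real.exp_pos _
  have he2 : Real.exp (-2:ℝ) ≤ 1/3 := by
    have h1 := Real.add_one_le_exp (2:ℝ)
    have h2 : Real.exp (-2:ℝ) * Real.exp 2 = 1 := by rw [← Real.exp_add]; norm_num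
    have h3 := Real.exp_pos (-2:ℝ)
    nlinarith
  have hu₀3 : u₀ ≤ 1/3 := le_trans (Real.exp_le_exp.2 (by linarith)) he2
  set t₀ := 1 - u₀ with ht₀_def
  have ht₀0 : (0:ℝ) ≤ t₀ := by rw [ht₀_def]; linarith
  have ht₀1 : t₀ < 1 := by rw [ht₀_def]; linarith
  have ht₀half : 1/2 ≤ t₀ := by rw [ht₀_def]; linarith
  set M := logSeries β t₀ with hM_def
  have hM1 : 1 ≤ M := logSeries_ge_one hβ0 ht₀0
  have hx₀pos : (0:ℝ) < 1 + x₀ := by linarith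
  have hPpos : (0:ℝ) < (1+x₀)^β := Real.rpow_pos_of_pos hx₀pos _
  have hB1 : (1:ℝ) ≤ 1 + Real.log 2 ^ (-β) + (8:ℝ)^β + (2:ℝ)^β := by
    have h1 : (0:ℝ) < Real.log 2 ^ (-β) := Real.rpow_pos_of_pos (Real.log_pos (by norm_num)) _
    have h2 : (0:ℝ) < (8:ℝ)^β := Real.rpow_pos_of_pos (by norm_num) _
    have h3 : (0:ℝ) < (2:ℝ)^β := Real.rpow_pos_of_pos (by norm_num) _
    linarith
  set c := 2*Real.exp 4 + (1 + Real.log 2 ^ (-β) + (8:ℝ)^β + (2:ℝ)^β)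
      + M * (1+x₀)^β + (Real.exp x₀)^2 with hc_def
  have hc1 : (1:ℝ) ≤ c := by
    rw [hc_def]
    have h1 : (0:ℝ) < Real.exp 4 := Real.exp_pos _
    have h2 : (0:ℝ) < M * (1+x₀)^β := by positivity
    have h3 : (0:ℝ) < (Real.exp x₀)^2 := by positivity
    linarith
  have hcpos : (0:ℝ) < c := by linarith
  refine ⟨c, hc1, fun t ht => ?_⟩
  obtain ⟨ht0, ht1⟩ := ht
  -- common facts
  have hupos : (0:ℝ) < 1 - t := by linarith
  have hlognp : Real.log (1 - t) ≤ 0 := Real.log_nonpos hupos.le (by linarith)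
  have hbase1 : (1:ℝ) ≤ 1 - Real.log (1 - t) := by linarith
  have hGnn : 0 ≤ (1 - Real.log (1 - t)) ^ (-β) / (1 - t) ^ 2 := by
    apply div_nonneg (Real.rpow_nonneg (by linarith) _) (by positivity)
  by_cases hcase : t₀ ≤ t
  · -- asymptotic region
    constructor
    · -- lower
      have hlow := lower_bound hβ0 (le_trans ht₀half hcase) ht1
      have h2e4 : (0:ℝ) < 2*Real.exp 4 := by positivity
      have hc2e4 : 2*Real.exp 4 ≤ c := by
        rw [hc_def]
        have h2 : (0:ℝ) < M * (1+x₀)^β := by positivity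
        have h3 : (0:ℝ) < (Real.exp x₀)^2 := by positivity
        linarith
      rw [div_mul_eq_mul_div, one_mul, div_le_iff₀ hcpos]
      calc (1 - Real.log (1 - t)) ^ (-β) / (1 - t) ^ 2
          ≤ 2*Real.exp 4 * logSeries β t := hlow
        _ ≤ c * logSeries β t := by
            apply mul_le_mul_of_nonneg_right hc2e4
            linarith [logSeries_ge_one hβ0 ht0]
        _ = logSeries β t * c := by ring
      -- goal shape: _ ≤ logSeries β t * c
    · -- upper
      have hup := upper_bound hβ0 hx₀2 hx₀ (by rw [ht₀_def, hu₀_def] at hcase; linarith) ht1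
      calc logSeries β t
          ≤ (1 + Real.log 2 ^ (-β) + (8:ℝ)^β + (2:ℝ)^β) *
              ((1 - Real.log (1 - t)) ^ (-β) / (1 - t) ^ 2) := hup
        _ ≤ c * ((1 - Real.log (1 - t)) ^ (-β) / (1 - t) ^ 2) := by
            apply mul_le_mul_of_nonneg_right _ hGnn
            rw [hc_def]
            have h1 : (0:ℝ) < 2*Real.exp 4 := by positivity
            have h2 : (0:ℝ) < M * (1+x₀)^β := by positivity
            have h3 : (0:ℝ) < (Real.exp x₀)^2 := by positivity
            linarith
  · -- compact region: t < t₀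
    push_neg at hcase
    have hu₀t : u₀ ≤ 1 - t := by rw [ht₀_def] at hcase; linarith
    constructor
    · -- lower: G ≤ exp(x₀)^2 ≤ c and logSeries ≥ 1
      have hA1 : (1 - Real.log (1 - t)) ^ (-β) ≤ 1 :=
        Real.rpow_le_one_of_one_le_of_nonpos hbase1 (by linarith)
      have hGle : (1 - Real.log (1 - t)) ^ (-β) / (1 - t) ^ 2 ≤ (Real.exp x₀)^2 := by
        have h1 : (1 - Real.log (1 - t)) ^ (-β) / (1 - t) ^ 2 ≤ 1 / (1 - t)^2 := by
          gcongr
        have h2 : 1/(1-t)^2 ≤ 1/u₀^2 := by gcongr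
        have h3 : 1/u₀^2 = (Real.exp x₀)^2 := by
          rw [hu₀_def, Real.exp_neg, inv_pow, one_div, inv_inv]
        linarith
      have hcge : (Real.exp x₀)^2 ≤ c := by
        rw [hc_def]
        have h1 : (0:ℝ) < 2*Real.exp 4 := by positivity
        have h2 : (0:ℝ) < M * (1+x₀)^β := by positivity
        linarith
      have h1c : (1/c) * ((1 - Real.log (1 - t)) ^ (-β) / (1 - t) ^ 2) ≤ 1 := by
        rw [div_mul_eq_mul_div, one_mul, div_le_one hcpos]
        linarith
      linarith [logSeries_ge_one hβ0 ht0]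
    · -- upper: logSeries ≤ M and c * G ≥ M
      have hfM : logSeries β t ≤ M := logSeries_mono hβ0 ht0 hcase.le ht₀1
      have hA2 : (1+x₀)^(-β) ≤ (1 - Real.log (1 - t)) ^ (-β) := by
        apply rpow_neg_anti hβ0 (by positivity)
        have hlg : Real.log u₀ ≤ Real.log (1-t) := Real.log_le_log hu₀pos hu₀t
        rw [hu₀_def, Real.log_exp] at hlg
        linarith
      have hG2 : (1+x₀)^(-β) ≤ (1 - Real.log (1 - t)) ^ (-β) / (1 - t) ^ 2 := by
        have hd1 : (1-t)^2 ≤ 1 := by nlinarith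
        have h0 : 0 ≤ (1 - Real.log (1 - t)) ^ (-β) := Real.rpow_nonneg (by linarith) _
        calc (1+x₀)^(-β) ≤ (1 - Real.log (1 - t)) ^ (-β) := hA2
          _ ≤ (1 - Real.log (1 - t)) ^ (-β) / (1 - t) ^ 2 := by
              rw [le_div_iff₀ (by positivity)]
              nlinarith
      have hMc : M ≤ c * (1+x₀)^(-β) := by
        have hinv : (1+x₀)^β * (1+x₀)^(-β) = 1 := by
          rw [← Real.rpow_add hx₀pos]; simp
        have hcM : M * (1+x₀)^β ≤ c := by
          rw [hc_def]
          have h1 : (0:ℝ) < 2*Real.exp 4 := by positivity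
          have h3 : (0:ℝ) < (Real.exp x₀)^2 := by positivity
          linarith
        have hQpos : (0:ℝ) < (1+x₀)^(-β) := Real.rpow_pos_of_pos hx₀pos _
        calc M = M * ((1+x₀)^β * (1+x₀)^(-β)) := by rw [hinv, mul_one]
          _ = (M * (1+x₀)^β) * (1+x₀)^(-β) := by ring
          _ ≤ c * (1+x₀)^(-β) := mul_le_mul_of_nonneg_right hcM hQpos.le
      calc logSeries β t ≤ M := hfM
        _ ≤ c * (1+x₀)^(-β) := hMc
        _ ≤ c * ((1 - Real.log (1 - t)) ^ (-β) / (1 - t) ^ 2) :=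
            mul_le_mul_of_nonneg_left hG2 hcpos.le
end

section
/- Let β > 1. There is a constant c ≥ 1 depending only on β such that for all integers n ≥ 2 and all t with e^{−1/n} < t ≤ e^{−1/(n+1)}, one has (1/c)·n² (log n)^{−β} ≤ 1 + ∑_{k=2}^∞ k(log k)^{−β} t^k ≤ c·n² (log n)^{−β}. -/
set_option maxHeartbeats 2000000

open Set

lemma logpow_bound {β : ℝ} (hβ : 1 < β) {n : ℕ} (hn : 2 ≤ n) :
    (Real.log n) ^ β ≤ (2*β)^β * Real.sqrt n := by
  have hβ0 : 0 < β := by linarith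
  have hN : (1:ℝ) ≤ n := by exact_mod_cast Nat.one_le_of_lt hn
  have hε : 0 < 1/(2*β) := by positivity
  have h1 : Real.log n ≤ (n:ℝ)^(1/(2*β)) / (1/(2*β)) :=
    Real.log_le_rpow_div (by positivity) hε
  have h1' : Real.log n ≤ 2*β * (n:ℝ)^(1/(2*β)) := by
    rw [div_div_eq_mul_div, div_one] at h1; linarith [h1]
  have h2 : (Real.log n)^β ≤ (2*β * (n:ℝ)^(1/(2*β)))^β :=
    Real.rpow_le_rpow (Real.log_nonneg hN) h1' hβ0.le
  have h3 : (2*β * (n:ℝ)^(1/(2*β)))^β = (2*β)^β * ((n:ℝ)^(1/(2*β)))^β :=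
    Real.mul_rpow (by positivity) (by positivity)
  have h4 : ((n:ℝ)^(1/(2*β)))^β = Real.sqrt n := by
    rw [← Real.rpow_mul (by positivity), show 1/(2*β)*β = (1/2 : ℝ) by field_simp,
      ← Real.sqrt_eq_rpow]
  calc (Real.log n)^β ≤ _ := h2
    _ = (2*β)^β * ((n:ℝ)^(1/(2*β)))^β := h3
    _ = (2*β)^β * Real.sqrt n := by rw [h4]

lemma key_pointwise {β : ℝ} (hβ : 1 < β) {n : ℕ} (hn : 2 ≤ n) {x : ℝ} (hx : 2 ≤ x) :
    x * (Real.log x) ^ (-β) ≤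
      ((2:ℝ)^β + (Real.log 2)^(-β) * (2*β)^β) * (Real.log n)^(-β) * (x + n) := by
  have hβ0 : 0 < β := by linarith
  set L := Real.log n with hLdef
  have hN1 : (1:ℝ) < n := by
    have : (2:ℝ) ≤ n := by exact_mod_cast hn
    linarith
  have hL0 : 0 < L := Real.log_pos hN1
  have hA : 0 < L^(-β) := Real.rpow_pos_of_pos hL0 _
  have hx0 : 0 < x := by linarith
  have hlogx : 0 < Real.log x := Real.log_pos (by linarith)
  have hlog2 : 0 < Real.log 2 := Real.log_pos one_lt_two
  have hC2 : 0 ≤ (Real.log 2)^(-β) * (2*β)^β := by positivity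
  have hC1 : (0:ℝ) ≤ 2^β := by positivity
  have hNn : (0:ℝ) ≤ n := Nat.cast_nonneg n
  rcases le_or_gt (n:ℝ) (x^2) with hcase | hcase
  · have hlogle : L ≤ 2 * Real.log x := by
      have := Real.log_le_log (by positivity) hcase
      rwa [Real.log_pow, Nat.cast_ofNat] at this
    have h2 : (Real.log x)^(-β) ≤ (L/2)^(-β) :=
      Real.rpow_le_rpow_of_nonpos (by positivity) (by linarith) (by linarith)
    have h3 : (L/2)^(-β) = 2^β * L^(-β) := by
      rw [Real.div_rpow hL0.le (by norm_num), Real.rpow_neg (by norm_num : (0:ℝ) ≤ 2),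
        div_inv_eq_mul, mul_comm]
    have h2' : (Real.log x)^(-β) ≤ 2^β * L^(-β) := h3 ▸ h2
    have step : x * (Real.log x)^(-β) ≤ x * (2^β * L^(-β)) :=
      mul_le_mul_of_nonneg_left h2' hx0.le
    nlinarith [mul_nonneg (mul_nonneg hC1 hA.le) hNn,
      mul_nonneg (mul_nonneg hC2 hA.le) (by linarith : (0:ℝ) ≤ x + n)]
  · have hsx : x ≤ Real.sqrt n := by
      have := Real.sqrt_le_sqrt hcase.le
      rwa [Real.sqrt_sq hx0.le] at this
    have hlogb : (Real.log x)^(-β) ≤ (Real.log 2)^(-β) :=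
      Real.rpow_le_rpow_of_nonpos hlog2 (Real.log_le_log two_pos hx) (by linarith)
    have hpow := logpow_bound hβ hn
    have hLpow : 0 ≤ L^β := Real.rpow_nonneg hL0.le _
    have hxb : x * L^β ≤ (2*β)^β * n := by
      calc x * L^β ≤ Real.sqrt n * ((2*β)^β * Real.sqrt n) :=
            mul_le_mul hsx hpow hLpow (Real.sqrt_nonneg _)
        _ = (2*β)^β * (Real.sqrt n * Real.sqrt n) := by ring
        _ = (2*β)^β * n := by rw [Real.mul_self_sqrt hNn]
    have hAA : L^β * L^(-β) = 1 := by
      rw [← Real.rpow_add hL0]; simp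
    have hxn : x ≤ (2*β)^β * n * L^(-β) := by
      have h := mul_le_mul_of_nonneg_right hxb hA.le
      rw [mul_assoc, hAA, mul_one] at h
      exact h
    have step : x * (Real.log x)^(-β) ≤ ((2*β)^β * n * L^(-β)) * (Real.log 2)^(-β) := by
      calc x * (Real.log x)^(-β) ≤ x * (Real.log 2)^(-β) :=
            mul_le_mul_of_nonneg_left hlogb hx0.le
        _ ≤ ((2*β)^β * n * L^(-β)) * (Real.log 2)^(-β) :=
            mul_le_mul_of_nonneg_right hxn (by positivity)
    nlinarith [mul_nonneg (mul_nonneg hC1 hA.le) (by linarith : (0:ℝ) ≤ x + n),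
      mul_nonneg (mul_nonneg hC2 hA.le) hx0.le]

theorem stmt17 (β : ℝ) (hβ : 1 < β) :
    ∃ c : ℝ, 1 ≤ c ∧ ∀ n : ℕ, 2 ≤ n → ∀ t : ℝ,
      Real.exp (-1 / (n : ℝ)) < t → t ≤ Real.exp (-1 / ((n : ℝ) + 1)) →
      (1 / c) * ((n : ℝ) ^ 2 * (Real.log n) ^ (-β)) ≤ logSeries β t ∧
        logSeries β t ≤ c * ((n : ℝ) ^ 2 * (Real.log n) ^ (-β)) := by
  have hβ0 : 0 < β := by linarith
  have hlog2 : 0 < Real.log 2 := Real.log_pos one_lt_two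
  set C : ℝ := (2:ℝ)^β + (Real.log 2)^(-β) * (2*β)^β with hCdef
  have hC0 : 0 < C := by positivity
  set c : ℝ := Real.exp 2 * 2^β + (2*β)^β + 8 * C with hcdef
  have hc1 : 1 ≤ c := by
    have h1 : (1:ℝ) ≤ Real.exp 2 := Real.one_le_exp (by norm_num)
    have h2 : (1:ℝ) ≤ (2:ℝ)^β := by
      rw [show (1:ℝ) = (2:ℝ)^(0:ℝ) by simp]
      exact Real.rpow_le_rpow_of_exponent_le one_le_two hβ0.le
    have h3 : (0:ℝ) ≤ (2*β)^β := by positivity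
    nlinarith
  have hc0 : 0 < c := by linarith
  refine ⟨c, hc1, fun n hn t ht1 ht2 => ?_⟩
  set N : ℝ := (n:ℝ) with hNdef
  have hN2 : (2:ℝ) ≤ N := by rw [hNdef]; exact_mod_cast hn
  have hN0 : 0 < N := by linarith
  have hL0 : 0 < Real.log N := Real.log_pos (by linarith)
  set L : ℝ := Real.log N with hLdef
  set A : ℝ := L^(-β) with hAdef
  have hA : 0 < A := Real.rpow_pos_of_pos hL0 _
  have ht0 : 0 < t := lt_trans (Real.exp_pos _) ht1
  have ht1' : t < 1 := lt_of_le_of_lt ht2 (Real.exp_lt_one_iff.mpr (by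
    rw [neg_div]
    have h : 0 < 1/(N+1) := by positivity
    linarith))
  have h1mt : 0 < 1 - t := by linarith
  have hE : Real.exp (-1/(N+1)) ≤ (N+1)/(N+2) := by
    have hadd := Real.add_one_le_exp (1/(N+1))
    have hpos : (0:ℝ) < 1/(N+1) + 1 := by positivity
    rw [neg_div, Real.exp_neg]
    calc (Real.exp (1/(N+1)))⁻¹ ≤ (1/(N+1)+1)⁻¹ := inv_anti₀ hpos hadd
      _ = (N+1)/(N+2) := by
          rw [show 1/(N+1)+1 = (N+2)/(N+1) by field_simp; ring, inv_div]
  have h1t : 1/(N+2) ≤ 1 - t := by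
    have ht3 : t ≤ (N+1)/(N+2) := ht2.trans hE
    have heq : (N+1)/(N+2) + 1/(N+2) = 1 := by
      rw [← add_div, show N+1+1 = N+2 by ring, div_self (by linarith : N+2 ≠ 0)]
    linarith
  have hprod : 1 ≤ (N+2)*(1-t) := by
    have h := mul_le_mul_of_nonneg_left h1t (by linarith : (0:ℝ) ≤ N+2)
    rw [mul_one_div, div_self (by linarith : N+2 ≠ 0)] at h
    exact h
  have hinv : (1-t)⁻¹ ≤ N+2 := by
    have h := inv_anti₀ (by positivity : (0:ℝ) < 1/(N+2)) h1t
    rwa [one_div, inv_inv] at h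
  have he2 : Real.exp (-2) ≤ t^(2*n) := by
    have h1 : Real.exp (-1/N)^(2*n) ≤ t^(2*n) :=
      pow_le_pow_left₀ (Real.exp_pos _).le ht1.le _
    have h2 : Real.exp (-1/N)^(2*n) = Real.exp (-2) := by
      rw [← Real.exp_nat_mul]
      congr 1
      push_cast
      rw [← hNdef]
      field_simp
    rw [h2] at h1; exact h1
  have htnorm : ‖t‖ < 1 := by rw [Real.norm_eq_abs, abs_of_pos ht0]; exact ht1'
  have hsumj : Summable (fun j : ℕ => (j:ℝ) * t^j) := by
    have h := summable_pow_mul_geometric_of_norm_lt_one (R := ℝ) 1 htnorm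
    simpa using h
  have hsumgeo : Summable (fun j : ℕ => t^j) := summable_geometric_of_lt_one ht0.le ht1'
  have hsumG : ∀ a : ℝ, Summable (fun j : ℕ => ((j:ℝ) + a) * t^j) := fun a =>
    ((hsumj.add (hsumgeo.mul_left a)).congr (fun j => by ring))
  have hvalG : ∀ a : ℝ, ∑' j : ℕ, ((j:ℝ) + a) * t^j = t/(1-t)^2 + a * (1-t)⁻¹ := by
    intro a
    have hfun : (fun j : ℕ => ((j:ℝ) + a) * t^j)
        = fun j : ℕ => (j:ℝ)*t^j + a*t^j := funext fun j => by ring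
    rw [hfun, Summable.tsum_add hsumj (hsumgeo.mul_left a), tsum_mul_left,
      tsum_geometric_of_lt_one ht0.le ht1', tsum_coe_mul_geometric_of_norm_lt_one htnorm]
  set f : ℕ → ℝ := fun j => ((j:ℝ)+2) * (Real.log ((j:ℝ)+2))^(-β) * t^(j+2) with hfdef
  have hj2 : ∀ j : ℕ, (2:ℝ) ≤ (j:ℝ)+2 := fun j => by
    have := (Nat.cast_nonneg j : (0:ℝ) ≤ j); linarith
  have hfnn : ∀ j, 0 ≤ f j := fun j => by
    have h1 : (0:ℝ) ≤ Real.log ((j:ℝ)+2) := Real.log_nonneg (by linarith [hj2 j])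
    exact mul_nonneg (mul_nonneg (by linarith [hj2 j]) (Real.rpow_nonneg h1 _)) (by positivity)
  have htpow : ∀ j : ℕ, t^(j+2) ≤ t^j := fun j =>
    pow_le_pow_of_le_one ht0.le ht1'.le (by omega)
  have hfsum : Summable f := by
    apply Summable.of_nonneg_of_le hfnn
      (f := fun j : ℕ => (Real.log 2)^(-β) * (((j:ℝ)+2) * t^j))
    · intro j
      have hlogj : 0 < Real.log ((j:ℝ)+2) := Real.log_pos (by linarith [hj2 j])
      have hb : (Real.log ((j:ℝ)+2))^(-β) ≤ (Real.log 2)^(-β) :=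
        Real.rpow_le_rpow_of_nonpos hlog2 (Real.log_le_log two_pos (hj2 j)) (by linarith)
      calc f j ≤ ((j:ℝ)+2) * (Real.log 2)^(-β) * t^j := by
            apply mul_le_mul (mul_le_mul_of_nonneg_left hb (by linarith [hj2 j])) (htpow j)
              (by positivity)
              (mul_nonneg (by linarith [hj2 j]) (Real.rpow_nonneg hlog2.le _))
        _ = (Real.log 2)^(-β) * (((j:ℝ)+2)*t^j) := by ring
    · exact (hsumG 2).mul_left _
  have hkey : ∀ j : ℕ, f j ≤ C * A * (((j:ℝ) + (N+2)) * t^j) := by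
    intro j
    have hk : ((j:ℝ)+2) * (Real.log ((j:ℝ)+2))^(-β) ≤ C * A * (((j:ℝ)+2) + N) :=
      key_pointwise hβ hn (hj2 j)
    have h1 : f j ≤ (C * A * (((j:ℝ)+2) + N)) * t^j := by
      have hprodnn : 0 ≤ C * A * (((j:ℝ)+2) + N) :=
        mul_nonneg (mul_nonneg hC0.le hA.le) (by linarith [hj2 j])
      calc f j = (((j:ℝ)+2) * (Real.log ((j:ℝ)+2))^(-β)) * t^(j+2) := by ring
        _ ≤ (C * A * (((j:ℝ)+2) + N)) * t^(j+2) :=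
            mul_le_mul_of_nonneg_right hk (by positivity)
        _ ≤ (C * A * (((j:ℝ)+2) + N)) * t^j :=
            mul_le_mul_of_nonneg_left (htpow j) hprodnn
    calc f j ≤ (C * A * (((j:ℝ)+2) + N)) * t^j := h1
      _ = C * A * (((j:ℝ) + (N+2)) * t^j) := by ring
  have htsum_ub : ∑' j, f j ≤ C * A * (t/(1-t)^2 + (N+2)*(1-t)⁻¹) := by
    have hgs : Summable (fun j : ℕ => C * A * (((j:ℝ) + (N+2)) * t^j)) :=
      (hsumG (N+2)).mul_left _
    calc ∑' j : ℕ, f j ≤ ∑' j : ℕ, C * A * (((j:ℝ) + (N+2)) * t^j) :=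
          Summable.tsum_le_tsum hkey hfsum hgs
      _ = C * A * ∑' j : ℕ, (((j:ℝ) + (N+2)) * t^j) := tsum_mul_left
      _ = C * A * (t/(1-t)^2 + (N+2)*(1-t)⁻¹) := by rw [hvalG (N+2)]
  have harith : t/(1-t)^2 + (N+2)*(1-t)⁻¹ ≤ 8 * N^2 := by
    have hsq : 1 ≤ ((N+2)*(1-t))^2 := by nlinarith [hprod]
    have h2 : t/(1-t)^2 ≤ (N+2)^2 := by
      rw [div_le_iff₀ (by positivity)]
      nlinarith [hsq, ht1'.le]
    have h3 : (N+2)*(1-t)⁻¹ ≤ (N+2)*(N+2) :=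
      mul_le_mul_of_nonneg_left hinv (by linarith : (0:ℝ) ≤ N+2)
    nlinarith [mul_nonneg (by linarith : (0:ℝ) ≤ N - 2) (by linarith : (0:ℝ) ≤ 6*N+4), h2, h3]
  have hup2 : ∑' j : ℕ, f j ≤ C * A * (8*N^2) :=
    htsum_ub.trans (mul_le_mul_of_nonneg_left harith (mul_nonneg hC0.le hA.le))
  have hsqN : Real.sqrt N ≤ N^2 := by
    rw [Real.sqrt_le_left (by positivity)]
    have h0 : N ≤ N^2 := by nlinarith
    have h1 : (1:ℝ) ≤ N^2 := by nlinarith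
    nlinarith [mul_le_mul_of_nonneg_right h1 (sq_nonneg N), h0]
  have h1A : 1 ≤ (2*β)^β * A * N^2 := by
    have hpow : L^β ≤ (2*β)^β * Real.sqrt N := logpow_bound hβ hn
    have hpow' : L^β ≤ (2*β)^β * N^2 :=
      hpow.trans (mul_le_mul_of_nonneg_left hsqN (by positivity))
    have hLA : L^β * A = 1 := by
      rw [hAdef, ← Real.rpow_add hL0]; simp
    calc (1:ℝ) = L^β * A := hLA.symm
      _ ≤ ((2*β)^β * N^2) * A := mul_le_mul_of_nonneg_right hpow' hA.le
      _ = (2*β)^β * A * N^2 := by ring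
  have hls : logSeries β t = 1 + ∑' j : ℕ, f j := by
    simp only [logSeries, hfdef]
  constructor
  · -- lower bound
    have hcard : (Finset.Icc (n-2) (2*n-2)).card = n+1 := by
      rw [Nat.card_Icc]; omega
    have hterm : ∀ j ∈ Finset.Icc (n-2) (2*n-2),
        N * ((2*L)^(-β) * Real.exp (-2)) ≤ f j := by
      intro j hj
      rw [Finset.mem_Icc] at hj
      have hjn : n ≤ j + 2 := by omega
      have hjn' : j + 2 ≤ 2*n := by omega
      have hj2r : N ≤ (j:ℝ)+2 := by rw [hNdef]; exact_mod_cast hjn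
      have hj2r' : (j:ℝ)+2 ≤ 2*N := by rw [hNdef]; exact_mod_cast hjn'
      have hlogj : 0 < Real.log ((j:ℝ)+2) := Real.log_pos (by linarith [hj2 j])
      have hlog_ub : Real.log ((j:ℝ)+2) ≤ 2*L := by
        have ha : Real.log ((j:ℝ)+2) ≤ Real.log (2*N) :=
          Real.log_le_log (by linarith [hj2 j]) hj2r'
        have hb : Real.log (2*N) = Real.log 2 + L := by
          rw [hLdef]; exact Real.log_mul (by norm_num) (by linarith)
        have hcc : Real.log 2 ≤ L := by
          rw [hLdef]; exact Real.log_le_log two_pos hN2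
        linarith
      have hr : (2*L)^(-β) ≤ (Real.log ((j:ℝ)+2))^(-β) :=
        Real.rpow_le_rpow_of_nonpos hlogj hlog_ub (by linarith)
      have htj : Real.exp (-2) ≤ t^(j+2) := by
        have h := pow_le_pow_of_le_one ht0.le ht1'.le (show j+2 ≤ 2*n by omega)
        linarith [he2]
      have h12 : N * (2*L)^(-β) ≤ ((j:ℝ)+2) * (Real.log ((j:ℝ)+2))^(-β) :=
        mul_le_mul hj2r hr (Real.rpow_nonneg (by linarith) _) (by linarith [hj2 j])
      calc N * ((2*L)^(-β) * Real.exp (-2)) = (N * (2*L)^(-β)) * Real.exp (-2) := by ring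
        _ ≤ (((j:ℝ)+2) * (Real.log ((j:ℝ)+2))^(-β)) * t^(j+2) :=
          mul_le_mul h12 htj (Real.exp_pos _).le
            (mul_nonneg (by linarith [hj2 j]) (Real.rpow_nonneg hlogj.le _))
        _ = f j := by rw [hfdef]
    have hsum_lb : (↑(n+1) : ℝ) * (N * ((2*L)^(-β) * Real.exp (-2)))
        ≤ ∑ j ∈ Finset.Icc (n-2) (2*n-2), f j := by
      have h := Finset.card_nsmul_le_sum (Finset.Icc (n-2) (2*n-2)) _ _ hterm
      rw [hcard, nsmul_eq_mul] at h
      exact h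
    have hsum_tsum : ∑ j ∈ Finset.Icc (n-2) (2*n-2), f j ≤ ∑' j : ℕ, f j :=
      Summable.sum_le_tsum _ (fun i _ => hfnn i) hfsum
    have h2L : (2*L)^(-β) = 2^(-β) * A := by
      rw [hAdef, Real.mul_rpow (by norm_num) hL0.le]
    have hlb : 2^(-β) * Real.exp (-2) * (N^2 * A) ≤ logSeries β t := by
      have e1 : (↑(n+1):ℝ) * (N * ((2*L)^(-β) * Real.exp (-2)))
          = (↑(n+1):ℝ) * N * (2^(-β) * A * Real.exp (-2)) := by rw [h2L]; ring
      have hxnn : 0 ≤ 2^(-β) * A * Real.exp (-2) :=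
        mul_nonneg (mul_nonneg (by positivity) hA.le) (Real.exp_pos _).le
      have hNle : N ≤ (↑(n+1):ℝ) := by rw [hNdef]; push_cast; linarith [hN2]
      have e2 : N^2 * (2^(-β)*A*Real.exp (-2)) ≤ (↑(n+1):ℝ)*N*(2^(-β)*A*Real.exp (-2)) := by
        apply mul_le_mul_of_nonneg_right _ hxnn
        nlinarith [hN0, hNle]
      rw [e1] at hsum_lb
      rw [hls]
      linarith [hsum_lb, hsum_tsum, e2]
    have hcge : Real.exp 2 * 2^β ≤ c := by
      rw [hcdef]
      linarith [hC0.le, (by positivity : (0:ℝ) ≤ (2*β)^β)]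
    have hEP : 0 < Real.exp 2 * 2^β := by positivity
    have hinvc : 1/c ≤ 2^(-β) * Real.exp (-2) := by
      calc 1/c ≤ 1/(Real.exp 2 * 2^β) := one_div_le_one_div_of_le hEP hcge
        _ = 2^(-β) * Real.exp (-2) := by
          rw [Real.exp_neg, Real.rpow_neg (by norm_num : (0:ℝ) ≤ 2), one_div, mul_inv]
          ring
    have hmul := mul_le_mul_of_nonneg_right hinvc
      (mul_nonneg (by positivity : (0:ℝ) ≤ N^2) hA.le)
    linarith [hlb, hmul]
  · -- upper bound
    have hfinal : 1 + ∑' j : ℕ, f j ≤ (2*β)^β * A * N^2 + C*A*(8*N^2) := by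
      linarith [h1A, hup2]
    have hce : (0:ℝ) ≤ Real.exp 2 * 2^β * (N^2 * A) :=
      mul_nonneg (by positivity) (mul_nonneg (by positivity) hA.le)
    rw [hls]
    have hexp : c * (N^2*A) = Real.exp 2 * 2^β * (N^2*A) + (2*β)^β * (N^2*A) + 8*C*(N^2*A) := by
      rw [hcdef]; ring
    linarith [hfinal, hce, hexp]
end

section
/- Let β ∈ (0,1), c_β = 4^{β+2} + 2^{β+2} + 1, and g(z,t) = z^{−β−2}(1−t)^{1/z−2}. Then for every t ∈ [0,1), ∫₁^∞ g(z,t) dz ≥ (1/c_β) ∑_{k=1}^∞ g(k,t). -/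
open MeasureTheory Set

theorem stmt19 (β : ℝ) (hβ : β ∈ Ioo (0 : ℝ) 1) (t : ℝ) (ht : t ∈ Ico (0 : ℝ) 1) :
    (1 / ((4 : ℝ) ^ (β + 2) + (2 : ℝ) ^ (β + 2) + 1)) *
        ∑' k : ℕ, ((k : ℝ) + 1) ^ (-β - 2) * (1 - t) ^ (1 / ((k : ℝ) + 1) - 2) ≤
      ∫ z in Ici (1 : ℝ), z ^ (-β - 2) * (1 - t) ^ (1 / z - 2) := by
  obtain ⟨hβ0, hβ1⟩ := hβ
  obtain ⟨ht0, ht1⟩ := ht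
  set u := 1 - t with hu_def
  have hu0 : 0 < u := by simp only [hu_def]; linarith
  have hu1 : u ≤ 1 := by simp only [hu_def]; linarith
  set g : ℝ → ℝ := fun z => z ^ (-β - 2) * u ^ (1 / z - 2) with hg
  have hgpos : ∀ z : ℝ, 0 < z → 0 < g z := fun z hz => by
    exact mul_pos (Real.rpow_pos_of_pos hz _) (Real.rpow_pos_of_pos hu0 _)
  -- continuity
  have hcont : ContinuousOn g (Ici (1:ℝ)) := by
    apply ContinuousOn.mul
    · exact ContinuousOn.rpow_const continuousOn_id (fun x hx => Or.inl (by
        have : (1:ℝ) ≤ x := hx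
        positivity))
    · apply ContinuousOn.rpow (continuousOn_const)
      · exact ContinuousOn.sub (ContinuousOn.div continuousOn_const continuousOn_id
          (fun x hx => by have : (1:ℝ) ≤ x := hx; positivity)) continuousOn_const
      · intro x hx
        exact Or.inl hu0.ne'
  -- integrability
  have hint : IntegrableOn g (Ici (1:ℝ)) := by
    rw [integrableOn_Ici_iff_integrableOn_Ioi]
    have hmaj : IntegrableOn (fun z : ℝ => u ^ (-2 : ℝ) * z ^ (-β - 2)) (Ioi (1:ℝ)) :=
      (integrableOn_Ioi_rpow_of_lt (by linarith) one_pos).const_mul _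
    refine Integrable.mono' hmaj
      ((hcont.mono (Ioi_subset_Ici le_rfl)).aestronglyMeasurable measurableSet_Ioi) ?_
    filter_upwards [ae_restrict_mem measurableSet_Ioi] with z hz
    have hz1 : (1:ℝ) < z := hz
    have hz0 : (0:ℝ) < z := by linarith
    rw [Real.norm_of_nonneg (hgpos z hz0).le]
    have h1 : u ^ (1 / z - 2) ≤ u ^ (-2 : ℝ) :=
      Real.rpow_le_rpow_of_exponent_ge hu0 hu1 (by
        have : 0 ≤ 1 / z := by positivity
        linarith)
    calc g z ≤ z ^ (-β - 2) * u ^ (-2 : ℝ) :=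
          mul_le_mul_of_nonneg_left h1 (Real.rpow_nonneg hz0.le _)
      _ = u ^ (-2 : ℝ) * z ^ (-β - 2) := mul_comm _ _
  -- decomposition of Ioi 1 into Iocs
  have hunion : (⋃ n : ℕ, Ioc ((n:ℝ) + 1) ((n:ℝ) + 2)) = Ioi (1:ℝ) := by
    ext x
    simp only [mem_iUnion, mem_Ioc, mem_Ioi]
    constructor
    · rintro ⟨n, h1, _⟩
      have : (0:ℝ) ≤ n := Nat.cast_nonneg n
      linarith
    · intro hx
      have hx0 : (0:ℝ) ≤ x := by linarith
      have h2 : 2 ≤ ⌈x⌉₊ := Nat.lt_ceil.mpr (by exact_mod_cast hx)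
      have hcast : ((⌈x⌉₊ - 2 : ℕ) : ℝ) = (⌈x⌉₊ : ℝ) - 2 := by
        push_cast [h2]; ring
      have hlt : (⌈x⌉₊ : ℝ) < x + 1 := Nat.ceil_lt_add_one hx0
      have hle : x ≤ (⌈x⌉₊ : ℝ) := Nat.le_ceil x
      exact ⟨⌈x⌉₊ - 2, by rw [hcast]; constructor <;> linarith⟩
  have hdisj : Pairwise (Function.onFun Disjoint fun n : ℕ => Ioc ((n:ℝ) + 1) ((n:ℝ) + 2)) := by
    intro i j hij
    rcases hij.lt_or_gt with h | h
    · have h' : (i:ℝ) + 1 ≤ (j:ℝ) := by exact_mod_cast h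
      exact Set.Ioc_disjoint_Ioc.mpr
        (le_trans (min_le_left _ _) (le_trans (by linarith) (le_max_right _ _)))
    · have h' : (j:ℝ) + 1 ≤ (i:ℝ) := by exact_mod_cast h
      exact Set.Ioc_disjoint_Ioc.mpr
        (le_trans (min_le_right _ _) (le_trans (by linarith) (le_max_left _ _)))
  have hSum : HasSum (fun n : ℕ => ∫ z in Ioc ((n:ℝ)+1) ((n:ℝ)+2), g z)
      (∫ z in Ici (1:ℝ), g z) := by
    have h := hasSum_integral_iUnion (μ := volume) (f := g)
      (fun n : ℕ => measurableSet_Ioc) hdisj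
      (by rw [hunion]; exact hint.mono_set (Ioi_subset_Ici le_rfl))
    rw [hunion] at h
    rwa [integral_Ici_eq_integral_Ioi]
  set P : ℝ := (2:ℝ) ^ (β + 2) with hP_def
  have hP0 : 0 < P := Real.rpow_pos_of_pos (by norm_num) _
  have hPinv : (2:ℝ) ^ (-β - 2) = P⁻¹ := by
    rw [hP_def, ← Real.rpow_neg (by norm_num : (0:ℝ) ≤ 2)]
    congr 1
    ring
  have hbound : ∀ n : ℕ, P⁻¹ * g ((n:ℝ)+1) ≤ ∫ z in Ioc ((n:ℝ)+1) ((n:ℝ)+2), g z := by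
    intro n
    have ha1 : (1:ℝ) ≤ (n:ℝ) + 1 := by
      have : (0:ℝ) ≤ n := Nat.cast_nonneg n
      linarith
    have key : ∀ z ∈ Ioc ((n:ℝ)+1) ((n:ℝ)+2), P⁻¹ * g ((n:ℝ)+1) ≤ g z := by
      intro z hz
      obtain ⟨hz1, hz2⟩ := hz
      set a : ℝ := (n:ℝ) + 1 with ha_def
      have hn : (0:ℝ) ≤ (n:ℝ) := Nat.cast_nonneg n
      have hz0 : 0 < z := by linarith
      have h1 : (2*a) ^ (-β-2) ≤ z ^ (-β-2) :=
        Real.rpow_le_rpow_of_nonpos hz0 (by rw [ha_def]; linarith) (by linarith)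
      have h2 : u ^ (1/a - 2) ≤ u ^ (1/z - 2) := by
        apply Real.rpow_le_rpow_of_exponent_ge hu0 hu1
        have : 1/z ≤ 1/a := one_div_le_one_div_of_le (by linarith) hz1.le
        linarith
      have hrw : (2*a) ^ (-β-2) = 2 ^ (-β-2) * a ^ (-β-2) :=
        Real.mul_rpow (by norm_num) (by linarith)
      have : P⁻¹ * g a = (2*a) ^ (-β-2) * u ^ (1/a - 2) := by
        rw [hrw, ← hPinv, hg]
        ring
      rw [this, hg]
      exact mul_le_mul h1 h2 (Real.rpow_nonneg hu0.le _)
        (Real.rpow_nonneg hz0.le _)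
    have hμ : volume (Ioc ((n:ℝ)+1) ((n:ℝ)+2)) ≠ ⊤ := measure_Ioc_lt_top.ne
    have hint' : IntegrableOn g (Ioc ((n:ℝ)+1) ((n:ℝ)+2)) :=
      hint.mono_set (fun x hx => le_trans ha1 hx.1.le)
    have := setIntegral_ge_of_const_le measurableSet_Ioc hμ key hint'
    rwa [Real.volume_real_Ioc_of_le (by linarith), show ((n:ℝ)+2) - ((n:ℝ)+1) = 1 by ring,
      smul_eq_mul, one_mul] at this
  have hterm : ∀ n : ℕ, g ((n:ℝ)+1) ≤ P * ∫ z in Ioc ((n:ℝ)+1) ((n:ℝ)+2), g z := by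
    intro n
    rw [← inv_mul_le_iff₀ hP0]
    exact hbound n
  have hSummable : Summable (fun n : ℕ => g ((n:ℝ)+1)) := by
    apply Summable.of_nonneg_of_le (fun n => (hgpos _ (by positivity)).le) hterm
    exact hSum.summable.mul_left P
  have hS_le : (∑' n : ℕ, g ((n:ℝ)+1)) ≤ P * ∫ z in Ici (1:ℝ), g z := by
    calc (∑' n : ℕ, g ((n:ℝ)+1))
        ≤ ∑' n : ℕ, P * ∫ z in Ioc ((n:ℝ)+1) ((n:ℝ)+2), g z :=
          Summable.tsum_le_tsum hterm hSummable (hSum.summable.mul_left P)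
      _ = P * ∫ z in Ici (1:ℝ), g z := by rw [tsum_mul_left, hSum.tsum_eq]
  have hI0 : 0 ≤ ∫ z in Ici (1:ℝ), g z :=
    setIntegral_nonneg measurableSet_Ici (fun x hx => (hgpos x (by
      have : (1:ℝ) ≤ x := hx
      linarith)).le)
  set c : ℝ := (4:ℝ) ^ (β + 2) + (2:ℝ) ^ (β + 2) + 1 with hc_def
  have hc0 : 0 < c := by
    have h4 : (0:ℝ) < (4:ℝ) ^ (β + 2) := Real.rpow_pos_of_pos (by norm_num) _
    rw [hc_def]; linarith
  have hPc : P ≤ c := by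
    have h4 : (0:ℝ) < (4:ℝ) ^ (β + 2) := Real.rpow_pos_of_pos (by norm_num) _
    rw [hc_def, hP_def]; linarith
  show (1 / c) * (∑' n : ℕ, g ((n:ℝ)+1)) ≤ ∫ z in Ici (1:ℝ), g z
  calc (1 / c) * (∑' n : ℕ, g ((n:ℝ)+1))
      ≤ (1 / c) * (P * ∫ z in Ici (1:ℝ), g z) :=
        mul_le_mul_of_nonneg_left hS_le (by positivity)
    _ = (P / c) * ∫ z in Ici (1:ℝ), g z := by ring
    _ ≤ 1 * ∫ z in Ici (1:ℝ), g z :=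
        mul_le_mul_of_nonneg_right ((div_le_one hc0).mpr hPc) hI0
    _ = ∫ z in Ici (1:ℝ), g z := one_mul _
end
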